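/- Let Ω ⊆ ℂ∖(-∞,0] be a simply connected domain, convex in the positive direction and not contained in any horizontal half-plane, and let h be a Koenigs map onto Ω. If θ_Ω = θ_Ω⁻ + θ_Ω⁺ ∈ (π, 2π], then for every λ ∈ ℂ with λ ≠ 0 one has D(e^{λh}) = ∞; that is, the point spectrum on the Dirichlet space equals {0}. (Theorem 1.4(d).) -/

import Mathlib

open MeasureTheory Set Complex Metric
open scoped ENNReal NNReal

noncomputable section

/-- The Dirichlet integral `D(f) = ∫_𝔻 |f'(z)|² dA(z)` over the unit disk. -/
def dirichletIntegral (f : ℂ → ℂ) : ℝ≥0∞ :=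
  ∫⁻ z in ball (0 : ℂ) 1, (‖deriv f z‖₊ : ℝ≥0∞) ^ 2

/-- `h` is a Koenigs map onto `Ω`: an injective holomorphic map on the unit disk with image `Ω`. -/
def IsKoenigsMap (h : ℂ → ℂ) (Ω : Set ℂ) : Prop :=
  DifferentiableOn ℂ h (ball 0 1) ∧ InjOn h (ball 0 1) ∧ h '' ball 0 1 = Ω

/-- `Ω` is convex in the positive direction: `Ω + t ⊆ Ω` for all `t ≥ 0`. -/
def ConvexPosDir (Ω : Set ℂ) : Prop :=
  ∀ t : ℝ, 0 ≤ t → ∀ w ∈ Ω, w + (t : ℂ) ∈ Ω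

/-- The open angular sector `S(α,β) = {w ≠ 0 : α < arg w < β}` (principal argument). -/
def sector (a b : ℝ) : Set ℂ :=
  {w : ℂ | w ≠ 0 ∧ a < Complex.arg w ∧ Complex.arg w < b}

/-- The lower inner argument `θ_Ω⁻`, for a domain in the slit plane. -/
def lowerInnerArg (Ω : Set ℂ) : ℝ :=
  sSup ({0} ∪ {θ : ℝ | θ ∈ Ioc 0 Real.pi ∧
    ∃ q : ℂ, (fun w => q + w) '' sector (-θ) 0 ⊆ Ω ∩ sector (-Real.pi) 0})

/-- The lower outer argument `Θ_Ω⁻`, for a domain in the slit plane. -/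
def lowerOuterArg (Ω : Set ℂ) : ℝ :=
  sInf {θ : ℝ | θ ∈ Ioc 0 Real.pi ∧
    ∃ q : ℂ, Ω ∩ sector (-Real.pi) 0 ⊆ (fun w => q + w) '' sector (-θ) 0}

/-- The upper inner argument `θ_Ω⁺`, for a domain in the slit plane. -/
def upperInnerArg (Ω : Set ℂ) : ℝ :=
  sSup ({0} ∪ {θ : ℝ | θ ∈ Ioc 0 Real.pi ∧
    ∃ q : ℂ, (fun w => q + w) '' sector 0 θ ⊆ Ω ∩ sector 0 Real.pi})

/-- The upper outer argument `Θ_Ω⁺`, for a domain in the slit plane. -/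
def upperOuterArg (Ω : Set ℂ) : ℝ :=
  sInf {θ : ℝ | θ ∈ Ioc 0 Real.pi ∧
    ∃ q : ℂ, Ω ∩ sector 0 Real.pi ⊆ (fun w => q + w) '' sector 0 θ}

open scoped Real

/- ---------- auxiliary lemmas ---------- -/

lemma clm_det (T : ℂ →L[ℝ] ℂ) :
    T.det = (T 1).re * (T I).im - (T I).re * (T 1).im := by
  rw [ContinuousLinearMap.det, ← LinearMap.det_toMatrix Complex.basisOneI, Matrix.det_fin_two]
  simp [LinearMap.toMatrix_apply, Complex.coe_basisOneI_repr, Complex.coe_basisOneI]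

lemma mulCLM_det (c : ℂ) :
    (((1 : ℂ →L[ℂ] ℂ).smulRight c).restrictScalars ℝ).det = Complex.normSq c := by
  rw [clm_det]
  simp [Complex.normSq_apply, Complex.mul_re, Complex.mul_im]

def polarCLM (z : ℂ) : ℂ →L[ℝ] ℂ :=
  (z.re : ℂ) • (Complex.exp ((z.im : ℂ) * I) • (Complex.imCLM.smulRight I)) +
    Complex.exp ((z.im : ℂ) * I) • (Complex.reCLM.smulRight 1)

lemma polarCLM_det (z : ℂ) : (polarCLM z).det = z.re := by
  rw [clm_det]
  simp only [polarCLM, ContinuousLinearMap.add_apply, ContinuousLinearMap.smul_apply,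
    ContinuousLinearMap.smulRight_apply, Complex.imCLM_apply, Complex.reCLM_apply,
    Complex.one_im, Complex.one_re, Complex.I_im, Complex.I_re, zero_smul, smul_zero,
    one_smul, zero_add, add_zero, smul_eq_mul]
  simp only [mul_zero, mul_one, zero_add, add_zero, Complex.mul_re, Complex.mul_im,
    Complex.I_re, Complex.I_im, Complex.exp_ofReal_mul_I_re, Complex.exp_ofReal_mul_I_im,
    Complex.ofReal_re, Complex.ofReal_im]
  have hsc := Real.sin_sq_add_cos_sq z.im
  linear_combination z.re * hsc

lemma hasFDerivAt_polar (q z : ℂ) :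
    HasFDerivAt (fun w : ℂ => q + (w.re : ℂ) * Complex.exp ((w.im : ℂ) * I))
      (polarCLM z) z := by
  have hN : HasFDerivAt (fun w : ℂ => (w.im : ℂ) * I) (Complex.imCLM.smulRight I) z := by
    refine (Complex.imCLM.smulRight I).hasFDerivAt.congr_of_eventuallyEq ?_
    filter_upwards with w
    simp [Complex.real_smul]
  have hA : HasFDerivAt (fun w : ℂ => (w.re : ℂ)) (Complex.reCLM.smulRight 1) z := by
    refine (Complex.reCLM.smulRight 1).hasFDerivAt.congr_of_eventuallyEq ?_
    filter_upwards with w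
    simp [Complex.real_smul]
  have hE : HasFDerivAt (fun w : ℂ => Complex.exp ((w.im : ℂ) * I))
      (Complex.exp ((z.im : ℂ) * I) • (Complex.imCLM.smulRight I)) z :=
    (Complex.hasDerivAt_exp _).comp_hasFDerivAt z hN
  exact (hA.mul hE).const_add q

lemma exists_good_dir (φ θa θb : ℝ) (hφ1 : -π < φ) (hφ2 : φ ≤ π)
    (ha : 0 < θa) (ha' : θa ≤ π) (hb : 0 < θb) (hb' : θb ≤ π) (hsum : π < θa + θb) :
    ∃ ψ, ((-θa < ψ ∧ ψ < 0) ∨ (0 < ψ ∧ ψ < θb)) ∧ 0 < Real.cos (φ + ψ) := by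
  have hπ : (0:ℝ) < π := Real.pi_pos
  rcases lt_or_ge φ (π/2) with hφlt | hφge
  · rcases lt_or_ge (-(π/2)) φ with hφgt | hφle
    · have hmin : (0:ℝ) < min θb (π/2 - φ) := lt_min hb (by linarith)
      refine ⟨min θb (π/2 - φ) / 2, Or.inr ⟨by linarith, ?_⟩, ?_⟩
      · have := min_le_left θb (π/2 - φ); linarith
      · apply Real.cos_pos_of_mem_Ioo
        constructor
        · linarith
        · have := min_le_right θb (π/2 - φ); linarith
    · rcases lt_or_ge (-(π/2) - φ) θb with h3a | h3b
      · refine ⟨((-(π/2) - φ) + min θb (-φ)) / 2, Or.inr ⟨?_, ?_⟩, ?_⟩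
        · have h1 : -(π/2) - φ < min θb (-φ) := lt_min h3a (by linarith)
          have h2 : (0:ℝ) ≤ -(π/2) - φ := by linarith
          linarith
        · have := min_le_left θb (-φ)
          have h1 : -(π/2) - φ < min θb (-φ) := lt_min h3a (by linarith)
          linarith
        · apply Real.cos_pos_of_mem_Ioo
          have h1 : -(π/2) - φ < min θb (-φ) := lt_min h3a (by linarith)
          have := min_le_right θb (-φ)
          constructor <;> nlinarith
      · have hθa : 3*π/2 + φ < θa := by linarith
        refine ⟨((-θa) + (-(3*π/2) - φ)) / 2, Or.inl ⟨by linarith, by linarith⟩, ?_⟩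
        rw [← Real.cos_add_two_pi]
        apply Real.cos_pos_of_mem_Ioo
        constructor <;> nlinarith
  · rcases lt_or_ge (φ - π/2) θa with h2a | h2b
    · refine ⟨(max (-θa) (-φ) + (π/2 - φ)) / 2, Or.inl ⟨?_, ?_⟩, ?_⟩
      · have h1 : max (-θa) (-φ) < π/2 - φ := max_lt (by linarith) (by linarith)
        have := le_max_left (-θa) (-φ); linarith
      · have h1 : max (-θa) (-φ) < π/2 - φ := max_lt (by linarith) (by linarith)
        linarith
      · apply Real.cos_pos_of_mem_Ioo
        have h1 : max (-θa) (-φ) < π/2 - φ := max_lt (by linarith) (by linarith)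
        have h2 := le_max_right (-θa) (-φ)
        constructor <;> nlinarith
    · have hθb : 3*π/2 - φ < θb := by linarith
      refine ⟨(3*π/2 - φ + θb) / 2, Or.inr ⟨by linarith, by linarith⟩, ?_⟩
      rw [← Real.cos_sub_two_pi]
      apply Real.cos_pos_of_mem_Ioo
      constructor <;> nlinarith


/-- **Theorem 1.4(d).** For a parabolic semigroup of zero hyperbolic step with Koenigs domain
`Ω ⊆ ℂ∖(-∞,0]`, if `θ_Ω = θ_Ω⁻ + θ_Ω⁺ ∈ (π, 2π]` then the point spectrum on the Dirichlet
space is `{0}`: `D(e^{λh}) = ∞` for every nonzero `λ`. -/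
theorem dirichlet_spectrum_zhs_large_innerArg
    (Ω : Set ℂ) (hopen : IsOpen Ω) (hsc : SimplyConnectedSpace ↥Ω)
    (hslit : Ω ⊆ {w : ℂ | 0 < w.re ∨ w.im ≠ 0})
    (hconv : ConvexPosDir Ω)
    (hnohalf : ∀ c : ℝ, ¬ Ω ⊆ {w : ℂ | w.im < c} ∧ ¬ Ω ⊆ {w : ℂ | c < w.im})
    (h : ℂ → ℂ) (hKoenigs : IsKoenigsMap h Ω)
    (hsum_gt : Real.pi < lowerInnerArg Ω + upperInnerArg Ω)
    (hsum_le : lowerInnerArg Ω + upperInnerArg Ω ≤ 2 * Real.pi)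
    (lam : ℂ) (hlam : lam ≠ 0) :
    dirichletIntegral (fun z => Complex.exp (lam * h z)) = ⊤ := by
  obtain ⟨hdiff, hinj, him⟩ := hKoenigs
  have hπ : (0:ℝ) < π := Real.pi_pos
  set g : ℂ → ℝ≥0∞ :=
    fun w => ENNReal.ofReal (‖lam‖ ^ 2 * Real.exp (2 * (lam * w).re)) with hg
  -- Step 1 : change of variables to Ω
  have hball : MeasurableSet (ball (0:ℂ) 1) := measurableSet_ball
  have hfd : ∀ z ∈ ball (0:ℂ) 1,
      HasFDerivWithinAt h (((1 : ℂ →L[ℂ] ℂ).smulRight (deriv h z)).restrictScalars ℝ)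
        (ball 0 1) z := by
    intro z hz
    have hda : DifferentiableAt ℂ h z := hdiff.differentiableAt (isOpen_ball.mem_nhds hz)
    exact (hda.hasDerivAt.hasFDerivAt.restrictScalars ℝ).hasFDerivWithinAt
  have hcov1 : dirichletIntegral (fun z => Complex.exp (lam * h z)) = ∫⁻ w in Ω, g w := by
    simp only [dirichletIntegral]
    rw [← him, lintegral_image_eq_lintegral_abs_det_fderiv_mul volume hball hfd hinj g]
    apply setLIntegral_congr_fun hball
    intro z hz
    beta_reduce
    have hda : DifferentiableAt ℂ h z := hdiff.differentiableAt (isOpen_ball.mem_nhds hz)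
    have hderiv : deriv (fun z => Complex.exp (lam * h z)) z
        = Complex.exp (lam * h z) * (lam * deriv h z) :=
      (HasDerivAt.cexp (hda.hasDerivAt.const_mul lam)).deriv
    rw [mulCLM_det, _root_.abs_of_nonneg (Complex.normSq_nonneg _)]
    rw [← ENNReal.ofReal_mul (Complex.normSq_nonneg _)]
    have hx : (‖deriv (fun z => Complex.exp (lam * h z)) z‖₊ : ℝ≥0∞)
        = ENNReal.ofReal ‖deriv (fun z => Complex.exp (lam * h z)) z‖ :=
      (ofReal_norm _).symm
    rw [hx, ← ENNReal.ofReal_pow (norm_nonneg _)]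
    congr 1
    rw [hderiv]
    rw [norm_mul, norm_mul, Complex.norm_exp]
    have he : Real.exp ((lam * h z).re) ^ 2 = Real.exp (2 * (lam * h z).re) := by
      rw [sq, ← Real.exp_add, two_mul]
    rw [mul_pow, mul_pow, he, Complex.sq_norm, Complex.sq_norm]
    ring
  rw [hcov1]
  -- Step 2 : extract inner sectors
  set AA := {θ : ℝ | θ ∈ Ioc 0 π ∧
      ∃ q : ℂ, (fun w => q + w) '' sector (-θ) 0 ⊆ Ω ∩ sector (-π) 0} with hAA
  set BB := {θ : ℝ | θ ∈ Ioc 0 π ∧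
      ∃ q : ℂ, (fun w => q + w) '' sector 0 θ ⊆ Ω ∩ sector 0 π} with hBB
  have hAbdd : BddAbove ({0} ∪ AA) := by
    refine BddAbove.mono ?_ (bddAbove_Icc (a := (0:ℝ)) (b := π))
    rintro x (hx | hx)
    · rw [mem_singleton_iff] at hx; subst hx; exact mem_Icc.2 ⟨le_rfl, hπ.le⟩
    · exact mem_Icc.2 ⟨hx.1.1.le, hx.1.2⟩
  have hBbdd : BddAbove ({0} ∪ BB) := by
    refine BddAbove.mono ?_ (bddAbove_Icc (a := (0:ℝ)) (b := π))
    rintro x (hx | hx)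
    · rw [mem_singleton_iff] at hx; subst hx; exact mem_Icc.2 ⟨le_rfl, hπ.le⟩
    · exact mem_Icc.2 ⟨hx.1.1.le, hx.1.2⟩
  have hLdef : lowerInnerArg Ω = sSup ({0} ∪ AA) := rfl
  have hUdef : upperInnerArg Ω = sSup ({0} ∪ BB) := rfl
  have hL0 : 0 ≤ lowerInnerArg Ω := by
    rw [hLdef]; exact le_csSup hAbdd (Or.inl rfl)
  have hU0 : 0 ≤ upperInnerArg Ω := by
    rw [hUdef]; exact le_csSup hBbdd (Or.inl rfl)
  have hLpi : lowerInnerArg Ω ≤ π := by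
    rw [hLdef]
    refine csSup_le ⟨0, Or.inl rfl⟩ ?_
    rintro x (hx | hx)
    · rw [mem_singleton_iff] at hx; subst hx; exact hπ.le
    · exact hx.1.2
  have hUpi : upperInnerArg Ω ≤ π := by
    rw [hUdef]
    refine csSup_le ⟨0, Or.inl rfl⟩ ?_
    rintro x (hx | hx)
    · rw [mem_singleton_iff] at hx; subst hx; exact hπ.le
    · exact hx.1.2
  set ε := (lowerInnerArg Ω + upperInnerArg Ω - π)/3 with hε
  have hεpos : 0 < ε := by rw [hε]; linarith
  obtain ⟨θa, hθaS, hθa_gt⟩ :=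
    exists_lt_of_lt_csSup (s := {0} ∪ AA) ⟨0, Or.inl rfl⟩
      (by rw [← hLdef]; linarith : lowerInnerArg Ω - ε < sSup ({0} ∪ AA))
  obtain ⟨θb, hθbS, hθb_gt⟩ :=
    exists_lt_of_lt_csSup (s := {0} ∪ BB) ⟨0, Or.inl rfl⟩
      (by rw [← hUdef]; linarith : upperInnerArg Ω - ε < sSup ({0} ∪ BB))
  have hθa_pos : 0 < θa := by
    have : 0 ≤ lowerInnerArg Ω - ε := by rw [hε]; linarith
    linarith
  have hθb_pos : 0 < θb := by
    have : 0 ≤ upperInnerArg Ω - ε := by rw [hε]; linarith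
    linarith
  have hθaA : θa ∈ AA := by
    rcases hθaS with hx | hx
    · rw [mem_singleton_iff] at hx; exact absurd hx hθa_pos.ne'
    · exact hx
  have hθbB : θb ∈ BB := by
    rcases hθbS with hx | hx
    · rw [mem_singleton_iff] at hx; exact absurd hx hθb_pos.ne'
    · exact hx
  have hsum' : π < θa + θb := by
    have h1 : lowerInnerArg Ω - ε < θa := hθa_gt
    have h2 : upperInnerArg Ω - ε < θb := hθb_gt
    rw [hε] at h1 h2
    linarith
  -- Step 3 : good direction
  obtain ⟨ψ₀, hψcase, hψcos⟩ :=
    exists_good_dir (Complex.arg lam) θa θb (Complex.arg_mem_Ioc lam).1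
      (Complex.arg_mem_Ioc lam).2 hθa_pos hθaA.1.2 hθb_pos hθbB.1.2 hsum'
  set u : ℝ → ℝ := fun ψ => lam.re * Real.cos ψ - lam.im * Real.sin ψ with hu
  have habs : 0 < ‖lam‖ := norm_pos_iff.2 hlam
  have hre : lam.re = ‖lam‖ * Real.cos (Complex.arg lam) := by
    rw [Complex.cos_arg hlam]; field_simp
  have him' : lam.im = ‖lam‖ * Real.sin (Complex.arg lam) := by
    rw [Complex.sin_arg]; field_simp
  have hu0 : 0 < u ψ₀ := by
    have : u ψ₀ = ‖lam‖ * Real.cos (Complex.arg lam + ψ₀) := by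
      rw [hu]; simp only []; rw [Real.cos_add, hre, him']; ring
    rw [this]; exact mul_pos habs hψcos
  -- Step 4 : unified sector data
  obtain ⟨qv, lo, hi, hlo, hhi, hψIoo, hsecΩ⟩ :
      ∃ (qv : ℂ) (lo hi : ℝ), -π ≤ lo ∧ hi ≤ π ∧ ψ₀ ∈ Ioo lo hi ∧
        (fun w => qv + w) '' sector lo hi ⊆ Ω := by
    rcases hψcase with ⟨h1, h2⟩ | ⟨h1, h2⟩
    · obtain ⟨q1, hq1⟩ := hθaA.2
      exact ⟨q1, -θa, 0, by linarith [hθaA.1.2], hπ.le, ⟨h1, h2⟩,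
        hq1.trans inter_subset_left⟩
    · obtain ⟨q2, hq2⟩ := hθbB.2
      exact ⟨q2, 0, θb, by linarith, hθbB.1.2, ⟨h1, h2⟩,
        hq2.trans inter_subset_left⟩
  set δ := u ψ₀ / 2 with hδ
  have hδpos : 0 < δ := by rw [hδ]; exact half_pos hu0
  have hUopen : IsOpen (Ioo lo hi ∩ {ψ | δ < u ψ}) := by
    refine isOpen_Ioo.inter (isOpen_lt continuous_const ?_)
    exact (continuous_const.mul Real.continuous_cos).sub
      (continuous_const.mul Real.continuous_sin)
  have hUmem : ψ₀ ∈ Ioo lo hi ∩ {ψ | δ < u ψ} := ⟨hψIoo, by rw [hδ] at *; simp; linarith⟩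
  obtain ⟨a, b, habmem, habsub⟩ :=
    mem_nhds_iff_exists_Ioo_subset.1 (hUopen.mem_nhds hUmem)
  have hab : a < b := lt_trans habmem.1 habmem.2
  -- Step 5 : the polar region
  set R := max 1 ((|(lam * qv).re| + 1) / δ) with hR
  have hR1 : (1:ℝ) ≤ R := le_max_left _ _
  set s : Set ℂ := {z : ℂ | z.re ∈ Ioi R ∧ z.im ∈ Ioo a b} with hs
  have hsmeas : MeasurableSet s :=
    (measurableSet_Ioi.preimage Complex.measurable_re).inter
      (measurableSet_Ioo.preimage Complex.measurable_im)
  set G : ℂ → ℂ := fun z => qv + (z.re : ℂ) * Complex.exp ((z.im : ℂ) * I) with hG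
  have hGfd : ∀ z ∈ s, HasFDerivWithinAt G (polarCLM z) s z :=
    fun z _ => (hasFDerivAt_polar qv z).hasFDerivWithinAt
  -- basic facts about points of s
  have hwfact : ∀ z ∈ s,
      ‖(z.re : ℂ) * Complex.exp ((z.im : ℂ) * I)‖ = z.re ∧
      Complex.arg ((z.re : ℂ) * Complex.exp ((z.im : ℂ) * I)) = z.im := by
    intro z hz
    obtain ⟨hz1, hz2⟩ := hz
    have hzIoo : z.im ∈ Ioo lo hi := (habsub hz2).1
    have hzre : (0:ℝ) < z.re := lt_of_lt_of_le zero_lt_one (hR1.trans (le_of_lt hz1))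
    have hexp : Complex.exp ((z.im : ℂ) * I)
        = (Real.cos z.im : ℂ) + (Real.sin z.im : ℂ) * I := by
      rw [Complex.exp_mul_I]
      simp [Complex.ofReal_cos, Complex.ofReal_sin]
    constructor
    · rw [norm_mul, Complex.norm_real, Real.norm_eq_abs, Complex.norm_exp_ofReal_mul_I, mul_one,
        abs_of_pos hzre]
    · rw [hexp, Complex.arg_real_mul _ hzre, Complex.ofReal_cos, Complex.ofReal_sin,
        Complex.arg_cos_add_sin_mul_I]
      exact ⟨by linarith [hzIoo.1], by linarith [hzIoo.2]⟩
  have hGinj : InjOn G s := by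
    intro z1 h1 z2 h2 heq
    have hw : (z1.re : ℂ) * Complex.exp ((z1.im : ℂ) * I)
        = (z2.re : ℂ) * Complex.exp ((z2.im : ℂ) * I) := by
      have := heq; rw [hG] at this; exact add_left_cancel this
    obtain ⟨ha1, hb1⟩ := hwfact z1 h1
    obtain ⟨ha2, hb2⟩ := hwfact z2 h2
    apply Complex.ext
    · rw [← ha1, ← ha2, hw]
    · rw [← hb1, ← hb2, hw]
  have hGmem : ∀ z ∈ s, G z ∈ Ω := by
    intro z hz
    obtain ⟨habsw, hargw⟩ := hwfact z hz
    obtain ⟨hz1, hz2⟩ := hz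
    have hzIoo : z.im ∈ Ioo lo hi := (habsub hz2).1
    have hzre : (0:ℝ) < z.re := lt_of_lt_of_le zero_lt_one (hR1.trans (le_of_lt hz1))
    refine hsecΩ ⟨(z.re : ℂ) * Complex.exp ((z.im : ℂ) * I), ?_, rfl⟩
    refine ⟨?_, ?_, ?_⟩
    · intro hc; rw [hc] at habsw; simp at habsw; linarith
    · rw [hargw]; exact hzIoo.1
    · rw [hargw]; exact hzIoo.2
  have hGre : ∀ z ∈ s, (0:ℝ) ≤ (lam * G z).re := by
    intro z hz
    obtain ⟨hz1, hz2⟩ := hz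
    have hzU : δ < u z.im := (habsub hz2).2
    have hzre : R < z.re := hz1
    have hre2 : (lam * G z).re = (lam * qv).re + z.re * u z.im := by
      rw [hG, hu]
      simp only [mul_add, Complex.add_re, Complex.mul_re, Complex.mul_im,
        Complex.ofReal_re, Complex.ofReal_im, Complex.exp_ofReal_mul_I_re,
        Complex.exp_ofReal_mul_I_im]
      ring
    rw [hre2]
    have hzre0 : (0:ℝ) < z.re := lt_of_lt_of_le zero_lt_one (hR1.trans hzre.le)
    have hRδ : (|(lam * qv).re| + 1) ≤ R * δ := by
      rw [hR]
      have h2 : (|(lam * qv).re| + 1) / δ ≤ max 1 ((|(lam * qv).re| + 1) / δ) :=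
        le_max_right _ _
      calc |(lam * qv).re| + 1 = ((|(lam * qv).re| + 1) / δ) * δ := by
            field_simp
        _ ≤ max 1 ((|(lam * qv).re| + 1) / δ) * δ := by
            exact mul_le_mul_of_nonneg_right h2 hδpos.le
    have hzu : R * δ ≤ z.re * u z.im := by
      apply mul_le_mul hzre.le hzU.le hδpos.le hzre0.le
    have := neg_abs_le ((lam * qv).re)
    linarith
  -- Step 6 : the lower bound integral is infinite
  have hκpos : (0:ℝ) < ‖lam‖ ^ 2 := by positivity
  set κ : ℝ≥0∞ := ENNReal.ofReal (‖lam‖ ^ 2) with hκ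
  have hκ0 : κ ≠ 0 := by
    rw [hκ]; exact (ENNReal.ofReal_pos.2 hκpos).ne'
  have hvols : volume s = ⊤ := by
    have hseq : s = Complex.measurableEquivRealProd ⁻¹' (Ioi R ×ˢ Ioo a b) := by
      ext z
      simp [hs, Complex.measurableEquivRealProd_apply, Set.mem_prod]
    rw [hseq, Complex.volume_preserving_equiv_real_prod.measure_preimage
      ((measurableSet_Ioi.prod measurableSet_Ioo).nullMeasurableSet)]
    rw [Measure.volume_eq_prod, Measure.prod_prod, Real.volume_Ioi, Real.volume_Ioo]
    exact ENNReal.top_mul (by simp [hab, sub_pos.2 hab] : ENNReal.ofReal (b - a) ≠ 0)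
  have hchain : (⊤:ℝ≥0∞) ≤ ∫⁻ w in Ω, g w := by
    have h1 : ∫⁻ w in G '' s, g w ≤ ∫⁻ w in Ω, g w := by
      apply lintegral_mono_set
      intro w hw
      obtain ⟨z, hzs, rfl⟩ := hw
      exact hGmem z hzs
    have h2 : ∫⁻ w in G '' s, g w
        = ∫⁻ z in s, ENNReal.ofReal |(polarCLM z).det| * g (G z) :=
      lintegral_image_eq_lintegral_abs_det_fderiv_mul volume hsmeas hGfd hGinj g
    have h3 : ∀ z ∈ s, κ ≤ ENNReal.ofReal |(polarCLM z).det| * g (G z) := by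
      intro z hz
      have hzre : R < z.re := hz.1
      have hdet : ENNReal.ofReal |(polarCLM z).det| = ENNReal.ofReal z.re := by
        rw [polarCLM_det, abs_of_pos (lt_of_lt_of_le zero_lt_one (hR1.trans hzre.le))]
      have hge1 : (1:ℝ≥0∞) ≤ ENNReal.ofReal |(polarCLM z).det| := by
        rw [hdet]; exact ENNReal.one_le_ofReal.2 (hR1.trans hzre.le)
      have hgeg : κ ≤ g (G z) := by
        rw [hκ, hg]
        apply ENNReal.ofReal_le_ofReal
        have hexp1 : (1:ℝ) ≤ Real.exp (2 * (lam * G z).re) := by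
          rw [← Real.exp_zero]
          apply Real.exp_le_exp.2
          have := hGre z hz
          linarith
        nlinarith
      calc κ = 1 * κ := (one_mul κ).symm
        _ ≤ ENNReal.ofReal |(polarCLM z).det| * g (G z) := mul_le_mul' hge1 hgeg
    have h4 : κ * volume s ≤ ∫⁻ z in s, ENNReal.ofReal |(polarCLM z).det| * g (G z) := by
      rw [← setLIntegral_const s κ]
      exact setLIntegral_mono' hsmeas h3
    rw [hvols] at h4
    rw [ENNReal.mul_top hκ0] at h4
    calc (⊤:ℝ≥0∞) ≤ ∫⁻ z in s, ENNReal.ofReal |(polarCLM z).det| * g (G z) := h4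
      _ = ∫⁻ w in G '' s, g w := h2.symm
      _ ≤ ∫⁻ w in Ω, g w := h1
  exact top_le_iff.1 hchain
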